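/- Let G be an FC group (every conjugacy class of G is finite) and let D : G → U(n) be a unitary representation. Then the center of the image D(G) has finite index in D(G). -/

import Mathlib

lemma centralizer_finiteIndex {K : Type*} [Group K] (y : K)
    (h : (Set.range fun k : K => k * y * k⁻¹).Finite) :
    (Subgroup.centralizer {y}).FiniteIndex := by
  haveI := h.to_subtype
  have hfin : Finite (K ⧸ Subgroup.centralizer {y}) := by
    refine Finite.of_injective (β := (Set.range fun k : K => k * y * k⁻¹))
      (fun q => Quotient.liftOn' q
        (fun k => (⟨k * y * k⁻¹, ⟨k, rfl⟩⟩ : (Set.range fun k : K => k * y * k⁻¹)))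
        ?_) ?_
    · intro a b hab
      have hc : y * (a⁻¹ * b) = (a⁻¹ * b) * y := by
        have := (QuotientGroup.leftRel_apply.mp hab)
        exact (Subgroup.mem_centralizer_iff.mp this y rfl)
      have : a * y * a⁻¹ = b * y * b⁻¹ := by
        calc a * y * a⁻¹ = a * (y * (a⁻¹ * b)) * b⁻¹ := by group
          _ = a * ((a⁻¹ * b) * y) * b⁻¹ := by rw [hc]
          _ = b * y * b⁻¹ := by group
      exact Subtype.ext this
    · intro q q'
      refine QuotientGroup.induction_on q fun a => QuotientGroup.induction_on q' fun b h => ?_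
      have hab : a * y * a⁻¹ = b * y * b⁻¹ := Subtype.ext_iff.mp h
      rw [QuotientGroup.eq]
      rw [Subgroup.mem_centralizer_iff]
      rintro g rfl
      calc g * (a⁻¹ * b) = a⁻¹ * (a * g * a⁻¹) * b := by group
        _ = a⁻¹ * (b * g * b⁻¹) * b := by rw [hab]
        _ = (a⁻¹ * b) * g := by group
  exact Subgroup.finiteIndex_of_finite_quotient

theorem stmt_0 {G : Type*} [Group G] (n : ℕ)
    (hFC : ∀ x : G, (Set.range fun h : G => h * x * h⁻¹).Finite)
    (D : G →* Matrix.unitaryGroup (Fin n) ℂ) :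
    (Subgroup.center ↥D.range).FiniteIndex := by
  classical
  set H := D.range with hH
  let u : ↥H → Matrix (Fin n) (Fin n) ℂ := fun h => ((h : Matrix.unitaryGroup (Fin n) ℂ) : Matrix (Fin n) (Fin n) ℂ)
  have hu_mul : ∀ a b : ↥H, u (a * b) = u a * u b := fun a b => rfl
  have hu_inj : Function.Injective u := by
    intro a b hab
    exact Subtype.ext (Subtype.ext hab)
  have hFC' : ∀ y : ↥H, (Set.range fun k : ↥H => k * y * k⁻¹).Finite := by
    intro y
    obtain ⟨x, hx⟩ := y.2
    refine Set.Finite.of_finite_image (f := fun z : ↥H => (z : Matrix.unitaryGroup (Fin n) ℂ))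
      (Set.Finite.subset ((hFC x).image D) ?_) Subtype.val_injective.injOn
    rintro _ ⟨_, ⟨k, rfl⟩, rfl⟩
    obtain ⟨g, hg⟩ := k.2
    refine ⟨g * x * g⁻¹, ⟨g, rfl⟩, ?_⟩
    simp only [map_mul, map_inv, hg, hx]
    rfl
  obtain ⟨b, hb_sub, hb_span, hb_li⟩ := exists_linearIndependent ℂ (Set.range u)
  have hb_fin : b.Finite := hb_li.setFinite
  haveI : Finite b := hb_fin.to_subtype
  have hchoice : ∀ m : b, ∃ h : ↥H, u h = (m : Matrix (Fin n) (Fin n) ℂ) := fun m => hb_sub m.2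
  choose f hf using hchoice
  haveI : ∀ m : b, (Subgroup.centralizer {f m}).FiniteIndex :=
    fun m => centralizer_finiteIndex _ (hFC' (f m))
  haveI : (⨅ m : b, Subgroup.centralizer {f m}).FiniteIndex :=
    Subgroup.finiteIndex_iInf fun m => inferInstance
  have key : (⨅ m : b, Subgroup.centralizer {f m}) ≤ Subgroup.center ↥H := by
    intro z hz
    rw [Subgroup.mem_center_iff]
    intro k
    apply hu_inj
    rw [hu_mul, hu_mul]
    have hcomm : ∀ m ∈ Submodule.span ℂ b, u z * m = m * u z := by
      intro m hm
      induction hm using Submodule.span_induction with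
      | mem m hmb =>
          have hz' := Subgroup.mem_iInf.mp hz ⟨m, hmb⟩
          have hzc : f ⟨m, hmb⟩ * z = z * f ⟨m, hmb⟩ :=
            Subgroup.mem_centralizer_iff.mp hz' _ rfl
          have := congrArg u hzc
          rw [hu_mul, hu_mul, hf] at this
          exact this.symm
      | zero => simp
      | add x y _ _ hx hy => rw [mul_add, add_mul, hx, hy]
      | smul c x _ hx => rw [mul_smul_comm, smul_mul_assoc, hx]
    have hk : u k ∈ Submodule.span ℂ b := by
      rw [hb_span]; exact Submodule.subset_span ⟨k, rfl⟩
    exact (hcomm _ hk).symm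
  exact Subgroup.finiteIndex_of_le key
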